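/- Let H be a real Hilbert space, F : H → ℝ differentiable with β-Lipschitz gradient for some β > 0, K ⊆ H a nonempty closed convex set, x ∈ K, g ∈ H, and x⁺ = proj_K(x − (1/β) g). Then ‖x⁺ − x‖² ≤ (4/β²) ‖∇F(x) − g‖² + (4/β) (F(x) − F(x⁺)). -/

import Mathlib

open scoped RealInnerProductSpace

/-- `q` is the metric projection of `p` onto the set `K`: `q ∈ K` and `q` is a closest
point of `K` to `p`. -/
def IsProjOn {H : Type*} [NormedAddCommGroup H] (K : Set H) (p q : H) : Prop :=
  q ∈ K ∧ ∀ y ∈ K, ‖p - q‖ ≤ ‖p - y‖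

/-- The descent lemma for a function with a `β`-Lipschitz gradient. -/
lemma descent_lemma_aux
    {H : Type*} [NormedAddCommGroup H] [InnerProductSpace ℝ H] [CompleteSpace H]
    (F : H → ℝ) (F' : H → H) (hF : ∀ x, HasGradientAt F (F' x) x)
    (β : ℝ) (hβ : 0 < β) (hlip : LipschitzWith β.toNNReal F')
    (x y : H) :
    F y ≤ F x + ⟪F' x, y - x⟫ + β / 2 * ‖y - x‖ ^ 2 := by
  set d := y - x with hd
  set c1 : ℝ := ⟪F' x, d⟫ with hc1
  set c2 : ℝ := β / 2 * ‖d‖ ^ 2 with hc2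
  set ψ : ℝ → ℝ := fun t => F (x + t • d) - t * c1 - c2 * t ^ 2 with hψdef
  have hderiv : ∀ t : ℝ, HasDerivAt ψ (⟪F' (x + t • d), d⟫ - c1 - c2 * (2 * t)) t := by
    intro t
    have hc : HasDerivAt (fun t : ℝ => x + t • d) d t := by
      simpa using ((hasDerivAt_id t).smul_const d).const_add x
    have hFc : HasDerivAt (fun t : ℝ => F (x + t • d)) (⟪F' (x + t • d), d⟫) t := by
      have := ((hasGradientAt_iff_hasFDerivAt.mp (hF (x + t • d))).comp_hasDerivAt t hc)
      simp [InnerProductSpace.toDual_apply_apply] at this; exact this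
    have h2 : HasDerivAt (fun t : ℝ => t * c1) c1 t := by
      simpa using (hasDerivAt_id t).mul_const c1
    have h3 : HasDerivAt (fun t : ℝ => c2 * t ^ 2) (c2 * (2 * t)) t := by
      simpa using (hasDerivAt_pow 2 t).const_mul c2
    exact (hFc.sub h2).sub h3
  have hlipnorm : ∀ a b : H, ‖F' a - F' b‖ ≤ β * ‖a - b‖ := by
    intro a b
    have := hlip.dist_le_mul a b
    simpa [dist_eq_norm, Real.coe_toNNReal β hβ.le] using this
  have hanti : AntitoneOn ψ (Set.Icc 0 1) := by
    apply antitoneOn_of_deriv_nonpos (convex_Icc 0 1)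
    · exact fun t _ => (hderiv t).continuousAt.continuousWithinAt
    · exact fun t _ => (hderiv t).differentiableAt.differentiableWithinAt
    · intro t ht
      rw [interior_Icc] at ht
      rw [(hderiv t).deriv]
      have h1 : ⟪F' (x + t • d) - F' x, d⟫ ≤ ‖F' (x + t • d) - F' x‖ * ‖d‖ :=
        real_inner_le_norm _ _
      have h2 : ‖F' (x + t • d) - F' x‖ ≤ β * (t * ‖d‖) := by
        have := hlipnorm (x + t • d) x
        simpa [norm_smul, abs_of_pos ht.1, mul_assoc] using this
      have h3 : ⟪F' (x + t • d), d⟫ - c1 = ⟪F' (x + t • d) - F' x, d⟫ := by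
        rw [inner_sub_left]
      have hdn : (0:ℝ) ≤ ‖d‖ := norm_nonneg _
      have h4 : c2 * (2 * t) = β * (t * ‖d‖) * ‖d‖ := by rw [hc2]; ring
      linarith [mul_le_mul_of_nonneg_right h2 hdn]
  have h01 : ψ 1 ≤ ψ 0 :=
    hanti (Set.mem_Icc.mpr ⟨le_refl 0, zero_le_one⟩) (Set.mem_Icc.mpr ⟨zero_le_one, le_refl 1⟩)
      zero_le_one
  have he : x + (1:ℝ) • d = y := by rw [one_smul, hd]; abel
  have he0 : x + (0:ℝ) • d = x := by simp
  simp only [hψdef, he, he0, one_mul, one_pow, mul_one, zero_mul, mul_zero, zero_pow,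
    sub_zero] at h01
  -- h01 : F y - c1 - c2 ≤ F x
  linarith [h01]

theorem inexact_projected_gradient_step_bound
    {H : Type*} [NormedAddCommGroup H] [InnerProductSpace ℝ H] [CompleteSpace H]
    (F : H → ℝ) (F' : H → H) (hF : ∀ x, HasGradientAt F (F' x) x)
    (β : ℝ) (hβ : 0 < β) (hlip : LipschitzWith β.toNNReal F')
    (K : Set H) (hKne : K.Nonempty) (hKc : IsClosed K) (hKconv : Convex ℝ K)
    (x : H) (hx : x ∈ K) (g : H) (xp : H)
    (hproj : IsProjOn K (x - (1 / β) • g) xp) :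
    ‖xp - x‖ ^ 2 ≤ (4 / β ^ 2) * ‖F' x - g‖ ^ 2 + (4 / β) * (F x - F xp) := by
  obtain ⟨hxpK, hmin⟩ := hproj
  set u := x - (1 / β) • g with hu
  -- projection characterization
  have hnorm_eq : ‖u - xp‖ = ⨅ w : K, ‖u - w‖ := by
    haveI : Nonempty K := ⟨⟨xp, hxpK⟩⟩
    apply le_antisymm
    · exact le_ciInf fun w => hmin w w.2
    · exact ciInf_le ⟨0, fun _ ⟨w, h⟩ => h ▸ norm_nonneg _⟩ (⟨xp, hxpK⟩ : K)
  have hchar := (norm_eq_iInf_iff_real_inner_le_zero hKconv hxpK).mp hnorm_eq x hx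
  -- hchar : ⟪u - xp, x - xp⟫ ≤ 0
  have hinner : β * ‖xp - x‖ ^ 2 ≤ ⟪g, x - xp⟫ := by
    have hexp : ⟪u - xp, x - xp⟫
        = ⟪x - xp, x - xp⟫ - (1 / β) * ⟪g, x - xp⟫ := by
      rw [hu, sub_right_comm, inner_sub_left, real_inner_smul_left]
    rw [hexp] at hchar
    have hsq : ⟪x - xp, x - xp⟫ = ‖xp - x‖ ^ 2 := by
      rw [real_inner_self_eq_norm_sq, ← norm_neg (x - xp)]; congr 1; abel
    rw [hsq] at hchar
    have := mul_le_mul_of_nonneg_left (sub_nonpos.mp hchar) hβ.le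
    calc β * ‖xp - x‖ ^ 2 ≤ β * ((1 / β) * ⟪g, x - xp⟫) := by
          nlinarith [hchar]
      _ = ⟪g, x - xp⟫ := by field_simp
  -- descent lemma
  have hdesc := descent_lemma_aux F F' hF β hβ hlip x xp
  -- split the inner product
  have hsplit : ⟪F' x, xp - x⟫ = ⟪F' x - g, xp - x⟫ + ⟪g, xp - x⟫ := by
    rw [inner_sub_left]; ring
  have hcs : ⟪F' x - g, xp - x⟫ ≤ ‖F' x - g‖ * ‖xp - x‖ := real_inner_le_norm _ _
  have hneg : ⟪g, xp - x⟫ = - ⟪g, x - xp⟫ := by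
    rw [← inner_neg_right]; congr 1; abel
  set t := ‖xp - x‖ with ht
  set a := ‖F' x - g‖ with ha
  have htn : 0 ≤ t := norm_nonneg _
  have han : 0 ≤ a := norm_nonneg _
  -- F xp ≤ F x + a * t - β/2 * t^2
  have hkey : F xp ≤ F x + a * t - β / 2 * t ^ 2 := by
    rw [hsplit, hneg] at hdesc
    linarith
  -- a * t ≤ a^2 / β + β/4 * t^2
  have hamgm : a * t ≤ a ^ 2 / β + β / 4 * t ^ 2 := by
    rw [← sub_nonneg]
    have he : a ^ 2 / β + β / 4 * t ^ 2 - a * t = (a - β * t / 2) ^ 2 / β := by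
      field_simp; ring
    rw [he]; positivity
  have hβ2 : (0:ℝ) < β ^ 2 := by positivity
  rw [div_mul_eq_mul_div, div_mul_eq_mul_div, ge_iff_le.symm]
  rw [ge_iff_le]
  have : β / 4 * t ^ 2 ≤ a ^ 2 / β + (F x - F xp) := by linarith
  calc t ^ 2 = (4 / β) * (β / 4 * t ^ 2) := by field_simp
    _ ≤ (4 / β) * (a ^ 2 / β + (F x - F xp)) := by
        apply mul_le_mul_of_nonneg_left this; positivity
    _ = 4 * a ^ 2 / β ^ 2 + 4 * (F x - F xp) / β := by field_simp
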